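/- For every real β ≥ 0 and every ε > 0, there exists a natural number N such that for all natural numbers n ≥ N and all x ∈ [0, 1]: 1 − (1 − x)^n − n·e^{−β}·x ≤ 1 − (1 + β)·e^{−β} + ε. -/

import Mathlib

/-- For every real `β ≥ 0` and `ε > 0` there is `N : ℕ` such that for all `n ≥ N`
and all `x ∈ [0, 1]`:
`1 − (1 − x)^n − n·e^{−β}·x ≤ 1 − (1 + β)·e^{−β} + ε`. -/
theorem monotone_symmetry_gap_bound
    (β : ℝ) (hβ : 0 ≤ β) (ε : ℝ) (hε : 0 < ε) :
    ∃ N : ℕ, ∀ n : ℕ, N ≤ n → ∀ x ∈ Set.Icc (0 : ℝ) 1,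
      1 - (1 - x) ^ n - (n : ℝ) * Real.exp (-β) * x ≤
        1 - (1 + β) * Real.exp (-β) + ε := by
  obtain ⟨M, hM⟩ := exists_nat_ge ((β + β ^ 2) / ε)
  refine ⟨M + 2, fun n hn x hx => ?_⟩
  obtain ⟨hx0, hx1⟩ := hx
  have hn2 : 2 ≤ n := le_trans (by omega) hn
  set m : ℝ := (n : ℝ) - 1 with hm
  have hm1 : 1 ≤ m := by
    have : (2 : ℝ) ≤ (n : ℝ) := by exact_mod_cast hn2
    simp only [hm]; linarith
  have hm0 : 0 < m := lt_of_lt_of_le one_pos hm1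
  set c : ℝ := Real.exp (-(β / m)) with hc
  have hc0 : 0 < c := Real.exp_pos _
  have hc1 : c ≤ 1 := Real.exp_le_one_iff.mpr (neg_nonpos.mpr (by positivity))
  clear_value m c
  have hcast : ((n - 1 : ℕ) : ℝ) = m := by
    rw [hm]; push_cast [Nat.cast_sub (by omega : 1 ≤ n)]; ring
  have hcn1 : c ^ (n - 1) = Real.exp (-β) := by
    rw [hc, ← Real.exp_nat_mul, hcast]
    congr 1
    field_simp
  -- Bernoulli step
  have key : c ^ n + (n : ℝ) * Real.exp (-β) * ((1 - x) - c) ≤ (1 - x) ^ n := by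
    have hu : -2 ≤ (1 - x) / c - 1 := by
      have : 0 ≤ (1 - x) / c := div_nonneg (by linarith) hc0.le
      linarith
    have hb := one_add_mul_le_pow hu n
    have h1 : (1 + ((1 - x) / c - 1)) ^ n = (1 - x) ^ n / c ^ n := by
      rw [show 1 + ((1 - x) / c - 1) = (1 - x) / c by ring, div_pow]
    rw [h1] at hb
    have hcnpos : (0 : ℝ) < c ^ n := by positivity
    have hb2 : (1 + (n : ℝ) * ((1 - x) / c - 1)) * c ^ n ≤ (1 - x) ^ n := by
      calc (1 + (n : ℝ) * ((1 - x) / c - 1)) * c ^ n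
          ≤ ((1 - x) ^ n / c ^ n) * c ^ n :=
            mul_le_mul_of_nonneg_right hb (le_of_lt hcnpos)
        _ = (1 - x) ^ n := by field_simp
    have hpow : c ^ n = c ^ (n - 1) * c := by
      rw [← pow_succ]; congr 1; omega
    have expand : (1 + (n : ℝ) * ((1 - x) / c - 1)) * c ^ n
        = c ^ n + (n : ℝ) * c ^ (n - 1) * ((1 - x) - c) := by
      rw [hpow]; field_simp
    rw [expand, hcn1] at hb2
    exact hb2
  have step1 : 1 - (1 - x) ^ n - (n : ℝ) * Real.exp (-β) * x
      ≤ 1 - c ^ n - (n : ℝ) * Real.exp (-β) * (1 - c) := by nlinarith [key]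
  have hEpos : 0 < Real.exp (-β) := Real.exp_pos _
  have hE1 : Real.exp (-β) ≤ 1 := Real.exp_le_one_iff.mpr (by linarith)
  -- lower bound A
  have hA : Real.exp (-β) * (1 - β / m) ≤ c ^ n := by
    have hcn : c ^ n = Real.exp (-β) * c := by
      have hnm : (n : ℝ) = m + 1 := by rw [hm]; ring
      rw [hc, ← Real.exp_nat_mul, hnm, ← Real.exp_add]
      congr 1
      field_simp
      ring
    rw [hcn]
    have h2 : 1 - β / m ≤ c := by
      have := Real.add_one_le_exp (-(β / m))
      rw [hc]; linarith
    nlinarith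
  -- lower bound B
  have hB : β - β ^ 2 / m ≤ (n : ℝ) * (1 - c) := by
    have hmb : 0 < m + β := by linarith
    have hden : 0 < 1 + β / m := by positivity
    have hexp : 1 + β / m ≤ Real.exp (β / m) := by
      have := Real.add_one_le_exp (β / m); linarith
    have hcle : c ≤ 1 / (1 + β / m) := by
      rw [hc, Real.exp_neg, ← one_div]
      exact one_div_le_one_div_of_le hden hexp
    have hs : 1 / (1 + β / m) = m / (m + β) := by
      rw [div_eq_div_iff hden.ne' hmb.ne']
      field_simp
    rw [hs] at hcle
    have h1c : β / (m + β) ≤ 1 - c := by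
      have hq : 1 - m / (m + β) = β / (m + β) := by field_simp; ring
      linarith
    have hnm : (n : ℝ) = m + 1 := by rw [hm]; ring
    have hfrac : β - β ^ 2 / m ≤ (m + 1) * (β / (m + β)) := by
      have e1 : β - β ^ 2 / m = (β * m - β ^ 2) / m := by field_simp
      have e2 : (m + 1) * (β / (m + β)) = ((m + 1) * β) / (m + β) := by ring
      rw [e1, e2, div_le_div_iff₀ hm0 hmb]
      nlinarith
    calc β - β ^ 2 / m ≤ (m + 1) * (β / (m + β)) := hfrac
      _ ≤ (m + 1) * (1 - c) := mul_le_mul_of_nonneg_left h1c (by linarith)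
      _ = (n : ℝ) * (1 - c) := by rw [hnm]
  -- combine
  have hMm : (M : ℝ) + 1 ≤ m := by
    have : ((M + 2 : ℕ) : ℝ) ≤ (n : ℝ) := by exact_mod_cast hn
    push_cast at this
    rw [hm]; linarith
  have heps : (β + β ^ 2) / m ≤ ε := by
    rw [div_le_iff₀ hm0]
    have h1 : (β + β ^ 2) ≤ ε * M := by
      rw [div_le_iff₀ hε] at hM; linarith
    have h2 : ε * (M : ℝ) ≤ ε * m := by nlinarith
    linarith
  have hfinal : 1 - c ^ n - (n : ℝ) * Real.exp (-β) * (1 - c)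
      ≤ 1 - (1 + β) * Real.exp (-β) + ε := by
    have hB' : Real.exp (-β) * (β - β ^ 2 / m) ≤ (n : ℝ) * Real.exp (-β) * (1 - c) := by
      calc Real.exp (-β) * (β - β ^ 2 / m)
          ≤ Real.exp (-β) * ((n : ℝ) * (1 - c)) := mul_le_mul_of_nonneg_left hB hEpos.le
        _ = (n : ℝ) * Real.exp (-β) * (1 - c) := by ring
    have hsum : Real.exp (-β) * (β / m + β ^ 2 / m) ≤ (β + β ^ 2) / m := by
      have h0 : 0 ≤ β / m + β ^ 2 / m := by positivity
      calc Real.exp (-β) * (β / m + β ^ 2 / m)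
          ≤ 1 * (β / m + β ^ 2 / m) := mul_le_mul_of_nonneg_right hE1 h0
        _ = (β + β ^ 2) / m := by ring
    have hid : Real.exp (-β) * (1 - β / m) + Real.exp (-β) * (β - β ^ 2 / m)
        = (1 + β) * Real.exp (-β) - Real.exp (-β) * (β / m + β ^ 2 / m) := by ring
    linarith [hA, hB', hsum, heps, hid]
  linarith [step1, hfinal]
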